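/- arXiv:2005.02279 — 3 statements merged into one kernel-verified Lean document; each statement's English description precedes it below -/
import Mathlib

section
/- Let G and H be finite simple graphs, each with exactly q ≥ 1 edges, such that every vertex of H is incident with at least one edge. Let f : V(G) → ℕ and g : V(H) → ℕ be injective vertex labelings with induced edge label sets {|f(u) − f(v)| : uv ∈ E(G)} = {1, 2, …, q} and {|g(x) − g(y)| : xy ∈ E(H)} = {1, 2, …, q}, and suppose f(V(G)) = g(V(H)) as sets. If φ : V(G) → V(H) is a graph homomorphism satisfying |f(u) − f(v)| = |g(φ(u)) − g(φ(v))| for every edge uv ∈ E(G), then φ is bijective and uv ∈ E(G) ⟺ φ(u)φ(v) ∈ E(H); in particular G and H are isomorphic. -/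
/-- A gracefully graph homomorphism with equal vertex label sets and equal (graceful) edge
label sets `{1,…,q}` is bijective and an isomorphism. -/
theorem gracefully_graph_homomorphism_is_isomorphism {V W : Type*}
    [Fintype V] [Fintype W]
    (G : SimpleGraph V) (H : SimpleGraph W)
    [DecidableRel G.Adj] [DecidableRel H.Adj]
    (q : ℕ) (hq : 1 ≤ q)
    (hGq : G.edgeFinset.card = q) (hHq : H.edgeFinset.card = q)
    (hHnoiso : ∀ w : W, ∃ w' : W, H.Adj w w')
    (f : V → ℕ) (g : W → ℕ)
    (hf : Function.Injective f) (hg : Function.Injective g)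
    (hEf : {n : ℤ | ∃ u v : V, G.Adj u v ∧ n = |(f u : ℤ) - (f v : ℤ)|}
            = Set.Icc (1 : ℤ) q)
    (hEg : {n : ℤ | ∃ x y : W, H.Adj x y ∧ n = |(g x : ℤ) - (g y : ℤ)|}
            = Set.Icc (1 : ℤ) q)
    (hV : Set.range f = Set.range g)
    (φ : V → W)
    (hhom : ∀ u v : V, G.Adj u v → H.Adj (φ u) (φ v))
    (hlabel : ∀ u v : V, G.Adj u v →
      |(f u : ℤ) - (f v : ℤ)| = |(g (φ u) : ℤ) - (g (φ v) : ℤ)|) :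
    Function.Bijective φ ∧
    (∀ u v : V, G.Adj u v ↔ H.Adj (φ u) (φ v)) ∧
    Nonempty (G ≃g H) := by
  classical
  -- edge label functions
  set labG : Sym2 V → ℤ :=
    Sym2.lift ⟨fun u v => |(f u : ℤ) - f v|, fun u v => abs_sub_comm _ _⟩ with hlabG
  set labH : Sym2 W → ℤ :=
    Sym2.lift ⟨fun x y => |(g x : ℤ) - g y|, fun x y => abs_sub_comm _ _⟩ with hlabH
  have cardIcc : (Finset.Icc (1:ℤ) (q:ℤ)).card = q := by
    rw [Int.card_Icc]; omega
  have hmemG : ∀ e ∈ G.edgeFinset, labG e ∈ Finset.Icc (1:ℤ) (q:ℤ) := by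
    intro e he
    induction e using Sym2.ind with
    | _ u v =>
      rw [SimpleGraph.mem_edgeFinset, SimpleGraph.mem_edgeSet] at he
      have h1 : labG s(u,v) ∈
          {n : ℤ | ∃ u v : V, G.Adj u v ∧ n = |(f u : ℤ) - (f v : ℤ)|} := ⟨u, v, he, rfl⟩
      rw [hEf] at h1
      simpa using h1
  have hmemH : ∀ e ∈ H.edgeFinset, labH e ∈ Finset.Icc (1:ℤ) (q:ℤ) := by
    intro e he
    induction e using Sym2.ind with
    | _ x y =>
      rw [SimpleGraph.mem_edgeFinset, SimpleGraph.mem_edgeSet] at he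
      have h1 : labH s(x,y) ∈
          {n : ℤ | ∃ x y : W, H.Adj x y ∧ n = |(g x : ℤ) - (g y : ℤ)|} := ⟨x, y, he, rfl⟩
      rw [hEg] at h1
      simpa using h1
  have hsurjG : ∀ n ∈ Finset.Icc (1:ℤ) (q:ℤ), ∃ e, ∃ _ : e ∈ G.edgeFinset, labG e = n := by
    intro n hn
    have hn' : n ∈ Set.Icc (1:ℤ) (q:ℤ) := by simpa using hn
    rw [← hEf] at hn'
    obtain ⟨u, v, huv, rfl⟩ := hn'
    exact ⟨s(u,v), by simpa using huv, rfl⟩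
  have hsurjH : ∀ n ∈ Finset.Icc (1:ℤ) (q:ℤ), ∃ e, ∃ _ : e ∈ H.edgeFinset, labH e = n := by
    intro n hn
    have hn' : n ∈ Set.Icc (1:ℤ) (q:ℤ) := by simpa using hn
    rw [← hEg] at hn'
    obtain ⟨x, y, hxy, rfl⟩ := hn'
    exact ⟨s(x,y), by simpa using hxy, rfl⟩
  have hinjG : ∀ ⦃e1⦄, e1 ∈ G.edgeFinset → ∀ ⦃e2⦄, e2 ∈ G.edgeFinset →
      labG e1 = labG e2 → e1 = e2 :=
    Finset.inj_on_of_surj_on_of_card_le (fun e _ => labG e) hmemG hsurjG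
      (by rw [hGq, cardIcc])
  have hinjH : ∀ ⦃e1⦄, e1 ∈ H.edgeFinset → ∀ ⦃e2⦄, e2 ∈ H.edgeFinset →
      labH e1 = labH e2 → e1 = e2 :=
    Finset.inj_on_of_surj_on_of_card_le (fun e _ => labH e) hmemH hsurjH
      (by rw [hHq, cardIcc])
  -- the edge map
  have hmapmem : ∀ e ∈ G.edgeFinset, Sym2.map φ e ∈ H.edgeFinset := by
    intro e he
    induction e using Sym2.ind with
    | _ u v =>
      rw [SimpleGraph.mem_edgeFinset, SimpleGraph.mem_edgeSet] at he
      simp only [SimpleGraph.mem_edgeFinset, Sym2.map_pair_eq, SimpleGraph.mem_edgeSet]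
      exact hhom u v he
  have hmaplab : ∀ e ∈ G.edgeFinset, labH (Sym2.map φ e) = labG e := by
    intro e he
    induction e using Sym2.ind with
    | _ u v =>
      rw [SimpleGraph.mem_edgeFinset, SimpleGraph.mem_edgeSet] at he
      simpa [hlabG, hlabH] using (hlabel u v he).symm
  have hinjψ : ∀ e1 e2, ∀ (h1 : e1 ∈ G.edgeFinset) (h2 : e2 ∈ G.edgeFinset),
      Sym2.map φ e1 = Sym2.map φ e2 → e1 = e2 := by
    intro e1 e2 h1 h2 he
    apply hinjG h1 h2
    rw [← hmaplab e1 h1, ← hmaplab e2 h2, he]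
  have hsurjψ : ∀ e' ∈ H.edgeFinset, ∃ e, ∃ _ : e ∈ G.edgeFinset, e' = Sym2.map φ e :=
    Finset.surj_on_of_inj_on_of_card_le (fun e _ => Sym2.map φ e) hmapmem hinjψ
      (by rw [hGq, hHq])
  -- surjectivity of φ
  have hsurjφ : Function.Surjective φ := by
    intro w
    obtain ⟨w', hw⟩ := hHnoiso w
    obtain ⟨e, he, hmap⟩ := hsurjψ s(w,w') (by simpa using hw)
    revert hmap
    induction e using Sym2.ind with
    | _ a b =>
      intro hmap
      rw [Sym2.map_pair_eq, Sym2.eq_iff] at hmap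
      rcases hmap with ⟨h1, _⟩ | ⟨h1, _⟩
      · exact ⟨a, h1.symm⟩
      · exact ⟨b, h1.symm⟩
  have hcard : Fintype.card V = Fintype.card W := by
    rw [← Nat.card_eq_fintype_card, ← Nat.card_eq_fintype_card]
    exact Nat.card_congr ((Equiv.ofInjective f hf).trans
      ((Equiv.setCongr hV).trans (Equiv.ofInjective g hg).symm))
  have hbij : Function.Bijective φ :=
    (Fintype.bijective_iff_surjective_and_card φ).mpr ⟨hsurjφ, hcard⟩
  have hiff : ∀ u v : V, G.Adj u v ↔ H.Adj (φ u) (φ v) := by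
    intro u v
    refine ⟨hhom u v, fun hadj => ?_⟩
    obtain ⟨e, he, hmap⟩ := hsurjψ s(φ u, φ v) (by simpa using hadj)
    revert hmap he
    induction e using Sym2.ind with
    | _ a b =>
      intro he hmap
      have hab : G.Adj a b := by
        rw [SimpleGraph.mem_edgeFinset, SimpleGraph.mem_edgeSet] at he
        exact he
      rw [Sym2.map_pair_eq, Sym2.eq_iff] at hmap
      rcases hmap with ⟨h1, h2⟩ | ⟨h1, h2⟩
      · rwa [hbij.1 h1.symm, hbij.1 h2.symm] at hab
      · rw [hbij.1 h2.symm, hbij.1 h1.symm] at hab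
        exact hab.symm
  exact ⟨hbij, hiff, ⟨⟨Equiv.ofBijective φ hbij, fun {a b} => (hiff a b).symm⟩⟩⟩
end

section
/- Let G and H be finite simple graphs, each with exactly q ≥ 1 edges, such that every vertex of H is incident with at least one edge. Let f : V(G) → ℕ and g : V(H) → ℕ be injective vertex labelings with induced edge label sets {|f(u) − f(v)| : uv ∈ E(G)} = {1, 3, 5, …, 2q−1} and {|g(x) − g(y)| : xy ∈ E(H)} = {1, 3, 5, …, 2q−1}, and suppose f(V(G)) = g(V(H)) as sets. If φ : V(G) → V(H) is a graph homomorphism satisfying |f(u) − f(v)| = |g(φ(u)) − g(φ(v))| for every edge uv ∈ E(G), then φ is bijective and uv ∈ E(G) ⟺ φ(u)φ(v) ∈ E(H); in particular G and H are isomorphic. -/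
lemma unique_edge_of_label {W : Type*} [Fintype W] (H : SimpleGraph W) [DecidableRel H.Adj]
    (q : ℕ) (hHq : H.edgeFinset.card = q) (g : W → ℕ)
    (hEg : {n : ℤ | ∃ x y : W, H.Adj x y ∧ n = |(g x : ℤ) - (g y : ℤ)|}
            = {n : ℤ | ∃ k : ℕ, k < q ∧ n = 2 * (k : ℤ) + 1}) :
    ∀ x y x' y' : W, H.Adj x y → H.Adj x' y' →
      |(g x : ℤ) - (g y : ℤ)| = |(g x' : ℤ) - (g y' : ℤ)| →
      (x = x' ∧ y = y') ∨ (x = y' ∧ y = x') := by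
  set L : Sym2 W → ℤ := Sym2.lift ⟨fun x y => |(g x : ℤ) - (g y : ℤ)|,
    fun x y => by dsimp only; rw [abs_sub_comm]⟩ with hL
  have himg : H.edgeFinset.image L = (Finset.range q).image (fun k : ℕ => 2 * (k : ℤ) + 1) := by
    ext n
    simp only [Finset.mem_image, Finset.mem_range]
    constructor
    · rintro ⟨e, he, rfl⟩
      induction e using Sym2.ind with
      | _ x y =>
        have hadj : H.Adj x y := by
          rwa [SimpleGraph.mem_edgeFinset, SimpleGraph.mem_edgeSet] at he
        have : L s(x, y) ∈ {n : ℤ | ∃ k : ℕ, k < q ∧ n = 2 * (k : ℤ) + 1} := by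
          rw [← hEg]; exact ⟨x, y, hadj, rfl⟩
        obtain ⟨k, hk, hkeq⟩ := this
        exact ⟨k, hk, hkeq.symm⟩
    · rintro ⟨k, hk, rfl⟩
      have : (2 * (k : ℤ) + 1) ∈ {n : ℤ | ∃ x y : W, H.Adj x y ∧ n = |(g x : ℤ) - (g y : ℤ)|} := by
        rw [hEg]; exact ⟨k, hk, rfl⟩
      obtain ⟨x, y, hadj, heq⟩ := this
      exact ⟨s(x, y), by rwa [SimpleGraph.mem_edgeFinset, SimpleGraph.mem_edgeSet], heq.symm⟩
  have hcard : (H.edgeFinset.image L).card = H.edgeFinset.card := by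
    rw [himg, hHq, Finset.card_image_of_injective]
    · exact Finset.card_range q
    · intro a b hab
      have h2 : 2 * (a : ℤ) + 1 = 2 * (b : ℤ) + 1 := hab
      omega
  have hinj : Set.InjOn L H.edgeFinset := Finset.card_image_iff.mp hcard
  intro x y x' y' hxy hxy' hlab
  have h1 : s(x, y) ∈ H.edgeFinset := by rwa [SimpleGraph.mem_edgeFinset, SimpleGraph.mem_edgeSet]
  have h2 : s(x', y') ∈ H.edgeFinset := by rwa [SimpleGraph.mem_edgeFinset, SimpleGraph.mem_edgeSet]
  have := hinj h1 h2 (by simpa [hL] using hlab)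
  exact Sym2.eq_iff.mp this

/-- An odd-gracefully graph homomorphism with equal vertex label sets and equal odd edge
label sets `{1,3,…,2q−1}` is bijective and an isomorphism. -/
theorem odd_gracefully_graph_homomorphism_is_isomorphism {V W : Type*}
    [Fintype V] [Fintype W]
    (G : SimpleGraph V) (H : SimpleGraph W)
    [DecidableRel G.Adj] [DecidableRel H.Adj]
    (q : ℕ) (hq : 1 ≤ q)
    (hGq : G.edgeFinset.card = q) (hHq : H.edgeFinset.card = q)
    (hHnoiso : ∀ w : W, ∃ w' : W, H.Adj w w')
    (f : V → ℕ) (g : W → ℕ)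
    (hf : Function.Injective f) (hg : Function.Injective g)
    (hEf : {n : ℤ | ∃ u v : V, G.Adj u v ∧ n = |(f u : ℤ) - (f v : ℤ)|}
            = {n : ℤ | ∃ k : ℕ, k < q ∧ n = 2 * (k : ℤ) + 1})
    (hEg : {n : ℤ | ∃ x y : W, H.Adj x y ∧ n = |(g x : ℤ) - (g y : ℤ)|}
            = {n : ℤ | ∃ k : ℕ, k < q ∧ n = 2 * (k : ℤ) + 1})
    (hV : Set.range f = Set.range g)
    (φ : V → W)
    (hhom : ∀ u v : V, G.Adj u v → H.Adj (φ u) (φ v))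
    (hlabel : ∀ u v : V, G.Adj u v →
      |(f u : ℤ) - (f v : ℤ)| = |(g (φ u) : ℤ) - (g (φ v) : ℤ)|) :
    Function.Bijective φ ∧
    (∀ u v : V, G.Adj u v ↔ H.Adj (φ u) (φ v)) ∧
    Nonempty (G ≃g H) := by
  classical
  have keyH := unique_edge_of_label H q hHq g hEg
  -- card V = card W
  have hcard : Fintype.card V = Fintype.card W := by
    have e : V ≃ W :=
      (Equiv.ofInjective f hf).trans ((Equiv.setCongr hV).trans (Equiv.ofInjective g hg).symm)
    exact Fintype.card_congr e
  -- surjectivity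
  have hsurj : Function.Surjective φ := by
    intro w
    obtain ⟨w', hww'⟩ := hHnoiso w
    have hmem : |(g w : ℤ) - (g w' : ℤ)| ∈ {n : ℤ | ∃ k : ℕ, k < q ∧ n = 2 * (k : ℤ) + 1} := by
      rw [← hEg]; exact ⟨w, w', hww', rfl⟩
    obtain ⟨k, hk, hkeq⟩ := hmem
    have hmemG : (2 * (k : ℤ) + 1) ∈
        {n : ℤ | ∃ u v : V, G.Adj u v ∧ n = |(f u : ℤ) - (f v : ℤ)|} := by
      rw [hEf]; exact ⟨k, hk, rfl⟩
    obtain ⟨u, v, huv, hval⟩ := hmemG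
    have hlab : |(g (φ u) : ℤ) - (g (φ v) : ℤ)| = |(g w : ℤ) - (g w' : ℤ)| := by
      rw [← hlabel u v huv, ← hval, hkeq]
    rcases keyH (φ u) (φ v) w w' (hhom u v huv) hww' hlab with ⟨h1, _⟩ | ⟨_, h2⟩
    · exact ⟨u, h1⟩
    · exact ⟨v, h2⟩
  have hbij : Function.Bijective φ :=
    (Fintype.bijective_iff_surjective_and_card φ).mpr ⟨hsurj, hcard⟩
  -- adjacency iff
  have hiff : ∀ u v : V, G.Adj u v ↔ H.Adj (φ u) (φ v) := by
    intro u v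
    refine ⟨hhom u v, fun hadj => ?_⟩
    have hmem : |(g (φ u) : ℤ) - (g (φ v) : ℤ)| ∈
        {n : ℤ | ∃ k : ℕ, k < q ∧ n = 2 * (k : ℤ) + 1} := by
      rw [← hEg]; exact ⟨φ u, φ v, hadj, rfl⟩
    obtain ⟨k, hk, hkeq⟩ := hmem
    have hmemG : (2 * (k : ℤ) + 1) ∈
        {n : ℤ | ∃ a b : V, G.Adj a b ∧ n = |(f a : ℤ) - (f b : ℤ)|} := by
      rw [hEf]; exact ⟨k, hk, rfl⟩
    obtain ⟨a, b, hab, hval⟩ := hmemG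
    have hlab : |(g (φ a) : ℤ) - (g (φ b) : ℤ)| = |(g (φ u) : ℤ) - (g (φ v) : ℤ)| := by
      rw [← hlabel a b hab, ← hval, hkeq]
    rcases keyH (φ a) (φ b) (φ u) (φ v) (hhom a b hab) hadj hlab with ⟨h1, h2⟩ | ⟨h1, h2⟩
    · rwa [hbij.1 h1, hbij.1 h2] at hab
    · rw [hbij.1 h1, hbij.1 h2] at hab
      exact hab.symm
  refine ⟨hbij, hiff, ⟨⟨Equiv.ofBijective φ hbij, ?_⟩⟩⟩
  intro a b
  exact (hiff a b).symm
end

section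
/- Let G be a finite connected bipartite simple graph with q ≥ 1 edges and bipartition V(G) = X ∪ Y (every edge has one end in X and one end in Y). Then G admits a set-ordered graceful labeling if and only if G admits a set-ordered odd-graceful labeling. -/
/-- `f` is a set-ordered graceful labeling of a bipartite graph `G` with `q` edges and
parts `X, Y`: `f` is injective into `{1,…,q+1}`, the induced edge labels form exactly
`{1,…,q}`, and every label on `X` is smaller than every label on `Y`. -/
def IsSetOrderedGracefulLabeling {V : Type*} (G : SimpleGraph V) (X Y : Set V)
    (q : ℕ) (f : V → ℕ) : Prop :=
  Function.Injective f ∧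
  (∀ v : V, f v ∈ Set.Icc 1 (q + 1)) ∧
  ({n : ℤ | ∃ u v : V, G.Adj u v ∧ n = |(f u : ℤ) - (f v : ℤ)|}
    = Set.Icc (1 : ℤ) q) ∧
  (∀ x ∈ X, ∀ y ∈ Y, f x < f y)

/-- `g` is a set-ordered odd-graceful labeling of a bipartite graph `G` with `q` edges and
parts `X, Y`: `g` is injective into `{1,…,2q+1}`, the induced edge labels form exactly
`{1,3,…,2q−1}`, and every label on `X` is smaller than every label on `Y`. -/
def IsSetOrderedOddGracefulLabeling {V : Type*} (G : SimpleGraph V) (X Y : Set V)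
    (q : ℕ) (g : V → ℕ) : Prop :=
  Function.Injective g ∧
  (∀ v : V, g v ∈ Set.Icc 1 (2 * q + 1)) ∧
  ({n : ℤ | ∃ u v : V, G.Adj u v ∧ n = |(g u : ℤ) - (g v : ℤ)|}
    = {n : ℤ | ∃ k : ℕ, k < q ∧ n = 2 * (k : ℤ) + 1}) ∧
  (∀ x ∈ X, ∀ y ∈ Y, g x < g y)

private lemma abs_cast_sub {a b : ℕ} (h : a ≤ b) : |(a : ℤ) - b| = (b : ℤ) - a := by
  rw [abs_sub_comm]
  apply abs_of_nonneg
  omega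

private lemma zmod_step (a k : ℕ) : ((a + (2 * k + 1) : ℕ) : ZMod 2) + 1 = (a : ZMod 2) := by
  have h : ((a + (2 * k + 1) + 1 : ℕ) : ZMod 2) = (a : ZMod 2) :=
    (ZMod.natCast_eq_natCast_iff _ _ _).mpr (show (a + (2 * k + 1) + 1) % 2 = a % 2 by omega)
  rw [← h]; push_cast; ring

private lemma walk_const {V : Type*} {G : SimpleGraph V} {h : V → ZMod 2}
    (he : ∀ u v, G.Adj u v → h u = h v) {u v : V} (p : G.Walk u v) : h u = h v := by
  induction p with
  | nil => rfl
  | cons a _ ih => exact (he _ _ a).trans ih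

/-- A finite connected bipartite graph admits a set-ordered graceful labeling if and only
if it admits a set-ordered odd-graceful labeling. -/
theorem set_ordered_graceful_iff_set_ordered_odd_graceful {V : Type*} [Fintype V]
    (G : SimpleGraph V) (hconn : G.Connected)
    (q : ℕ) (hq : 1 ≤ q) [DecidableRel G.Adj] (hGq : G.edgeFinset.card = q)
    (X Y : Set V) (hunion : X ∪ Y = Set.univ) (hdisj : Disjoint X Y)
    (hbip : ∀ u v : V, G.Adj u v → (u ∈ X ∧ v ∈ Y) ∨ (u ∈ Y ∧ v ∈ X)) :
    (∃ f : V → ℕ, IsSetOrderedGracefulLabeling G X Y q f) ↔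
    (∃ g : V → ℕ, IsSetOrderedOddGracefulLabeling G X Y q g) := by
  classical
  have hXY : ∀ v : V, v ∉ X → v ∈ Y := by
    intro v hv
    have : v ∈ X ∪ Y := hunion ▸ Set.mem_univ v
    rcases this with h | h
    · exact absurd h hv
    · exact h
  have hYX : ∀ v : V, v ∈ Y → v ∉ X := by
    intro v hv hx
    exact Set.disjoint_left.mp hdisj hx hv
  constructor
  · rintro ⟨f, hinj, hrange, hlab, hord⟩
    -- there is a vertex of X
    have h1mem : (1 : ℤ) ∈ {n : ℤ | ∃ u v : V, G.Adj u v ∧ n = |(f u : ℤ) - (f v : ℤ)|} := by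
      rw [hlab]
      simp only [Set.mem_Icc]
      exact ⟨le_refl 1, by exact_mod_cast hq⟩
    obtain ⟨u0, v0, hadj0, -⟩ := h1mem
    obtain ⟨x0, hx0⟩ : ∃ x, x ∈ X := by
      rcases hbip u0 v0 hadj0 with ⟨h, -⟩ | ⟨-, h⟩
      · exact ⟨u0, h⟩
      · exact ⟨v0, h⟩
    have hfy2 : ∀ y ∈ Y, 2 ≤ f y := by
      intro y hy
      have h1 := hord x0 hx0 y hy
      have h2 := (hrange x0).1
      omega
    refine ⟨fun v => if v ∈ X then 2 * f v - 1 else 2 * f v - 2, ?_, ?_, ?_, ?_⟩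
    · intro a b hab
      simp only at hab
      apply hinj
      by_cases ha : a ∈ X <;> by_cases hb : b ∈ X <;>
        simp only [ha, hb, if_pos, if_neg, if_true, if_false] at hab
      · have := (hrange a).1; have := (hrange b).1; omega
      · have := (hrange a).1; have h2 := hfy2 b (hXY b hb); omega
      · have := (hrange b).1; have h2 := hfy2 a (hXY a ha); omega
      · have := hfy2 a (hXY a ha); have := hfy2 b (hXY b hb); omega
    · intro v
      by_cases hv : v ∈ X <;>
        simp only [hv, if_true, if_false, Set.mem_Icc]
      · have h1 := (hrange v).1; have h2 := (hrange v).2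
        omega
      · have h1 := hfy2 v (hXY v hv); have h2 := (hrange v).2
        omega
    · ext n
      simp only [Set.mem_setOf_eq]
      constructor
      · rintro ⟨u, v, huv, rfl⟩
        have hm : |(f u : ℤ) - f v| ∈ Set.Icc (1 : ℤ) q := by
          rw [← hlab]; exact ⟨u, v, huv, rfl⟩
        simp only [Set.mem_Icc] at hm
        rcases hbip u v huv with ⟨hu, hv⟩ | ⟨hu, hv⟩
        · have hlt : f u < f v := hord u hu v hv
          have habs := abs_cast_sub hlt.le
          rw [habs] at hm
          refine ⟨f v - f u - 1, by omega, ?_⟩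
          simp only [hu, hYX v hv, if_true, if_false]
          have h1 := (hrange u).1
          have h2 := hfy2 v hv
          rw [abs_cast_sub (by omega)]
          omega
        · have hlt : f v < f u := hord v hv u hu
          rw [abs_sub_comm] at hm
          have habs := abs_cast_sub hlt.le
          rw [habs] at hm
          refine ⟨f u - f v - 1, by omega, ?_⟩
          simp only [hv, hYX u hu, if_true, if_false]
          rw [abs_sub_comm]
          have h1 := (hrange v).1
          have h2 := hfy2 u hu
          rw [abs_cast_sub (by omega)]
          omega
      · rintro ⟨k, hk, rfl⟩
        have hm : ((k : ℤ) + 1) ∈ Set.Icc (1 : ℤ) q := by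
          simp only [Set.mem_Icc]
          omega
        rw [← hlab] at hm
        obtain ⟨u, v, huv, heq⟩ := hm
        refine ⟨u, v, huv, ?_⟩
        rcases hbip u v huv with ⟨hu, hv⟩ | ⟨hu, hv⟩
        · have hlt : f u < f v := hord u hu v hv
          rw [abs_cast_sub hlt.le] at heq
          simp only [hu, hYX v hv, if_true, if_false]
          have h1 := (hrange u).1
          have h2 := hfy2 v hv
          rw [abs_cast_sub (by omega)]
          omega
        · have hlt : f v < f u := hord v hv u hu
          rw [abs_sub_comm, abs_cast_sub hlt.le] at heq
          simp only [hv, hYX u hu, if_true, if_false]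
          have h1 := (hrange v).1
          have h2 := hfy2 u hu
          rw [abs_sub_comm, abs_cast_sub (by omega)]
          omega
    · intro x hx y hy
      simp only [hx, hYX y hy, if_true, if_false]
      have h1 := (hrange x).1
      have h2 := hord x hx y hy
      omega
  · rintro ⟨g, hinj, hrange, hlab, hord⟩
    -- each edge has odd label, so parity alternates between parts
    have hedge : ∀ u v : V, G.Adj u v → u ∈ X → v ∈ Y →
        ∃ k : ℕ, k < q ∧ g v = g u + (2 * k + 1) := by
      intro u v huv hu hv
      have hm : |(g u : ℤ) - g v| ∈ {n : ℤ | ∃ k : ℕ, k < q ∧ n = 2 * (k : ℤ) + 1} := by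
        rw [← hlab]; exact ⟨u, v, huv, rfl⟩
      obtain ⟨k, hk, he⟩ := hm
      have hlt : g u < g v := hord u hu v hv
      rw [abs_cast_sub hlt.le] at he
      exact ⟨k, hk, by omega⟩
    -- the parity function is constant
    set h : V → ZMod 2 := fun v => (g v : ZMod 2) + (if v ∈ X then 0 else 1) with hh
    have hedgeh : ∀ u v : V, G.Adj u v → h u = h v := by
      intro u v huv
      rcases hbip u v huv with ⟨hu, hv⟩ | ⟨hu, hv⟩
      · obtain ⟨k, -, hk⟩ := hedge u v huv hu hv
        simp only [hh, hu, hYX v hv, if_true, if_false, hk, add_zero]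
        exact (zmod_step (g u) k).symm
      · obtain ⟨k, -, hk⟩ := hedge v u (G.adj_symm huv) hv hu
        simp only [hh, hv, hYX u hu, if_true, if_false, hk, add_zero]
        exact zmod_step (g v) k
    have hconst : ∀ a b : V, h a = h b := by
      intro a b
      exact walk_const hedgeh ((hconn a b).some)
    have hpar : ∀ a b : V, ((a ∈ X ∧ b ∈ X) ∨ (a ∉ X ∧ b ∉ X)) → g a % 2 = g b % 2 := by
      intro a b hab
      have hc := hconst a b
      have : ((g a : ℕ) : ZMod 2) = ((g b : ℕ) : ZMod 2) := by
        rcases hab with ⟨ha, hb⟩ | ⟨ha, hb⟩ <;>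
          simp only [hh, ha, hb, if_true, if_false, add_zero] at hc
        · exact hc
        · exact add_right_cancel hc
      have := (ZMod.natCast_eq_natCast_iff _ _ _).mp this
      exact this
    refine ⟨fun v => (g v + if v ∈ X then 1 else 2) / 2, ?_, ?_, ?_, ?_⟩
    · intro a b hab
      simp only at hab
      by_cases ha : a ∈ X <;> by_cases hb : b ∈ X <;>
        simp only [ha, hb, if_true, if_false] at hab
      · have hp := hpar a b (Or.inl ⟨ha, hb⟩)
        exact hinj (by omega)
      · have := hord a ha b (hXY b hb)
        omega
      · have := hord b hb a (hXY a ha)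
        omega
      · have hp := hpar a b (Or.inr ⟨ha, hb⟩)
        exact hinj (by omega)
    · intro v
      have h1 := (hrange v).1
      have h2 := (hrange v).2
      simp only [Set.mem_Icc] at h1 h2 ⊢
      by_cases hv : v ∈ X <;> simp only [hv, if_true, if_false] <;> omega
    · ext n
      simp only [Set.mem_setOf_eq, Set.mem_Icc]
      constructor
      · rintro ⟨u, v, huv, rfl⟩
        rcases hbip u v huv with ⟨hu, hv⟩ | ⟨hu, hv⟩
        · obtain ⟨k, hk, hgv⟩ := hedge u v huv hu hv
          simp only [hu, hYX v hv, if_true, if_false]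
          rw [abs_cast_sub (by omega)]
          constructor <;> push_cast <;> omega
        · obtain ⟨k, hk, hgv⟩ := hedge v u (G.adj_symm huv) hv hu
          simp only [hv, hYX u hu, if_true, if_false]
          rw [abs_sub_comm, abs_cast_sub (by omega)]
          constructor <;> push_cast <;> omega
      · rintro ⟨hn1, hnq⟩
        have hm : (2 * ((n.toNat - 1 : ℕ) : ℤ) + 1) ∈
            {m : ℤ | ∃ u v : V, G.Adj u v ∧ m = |(g u : ℤ) - (g v : ℤ)|} := by
          rw [hlab]
          exact ⟨n.toNat - 1, by omega, rfl⟩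
        obtain ⟨u, v, huv, heq⟩ := hm
        refine ⟨u, v, huv, ?_⟩
        rcases hbip u v huv with ⟨hu, hv⟩ | ⟨hu, hv⟩
        · have hlt : g u < g v := hord u hu v hv
          rw [abs_cast_sub hlt.le] at heq
          simp only [hu, hYX v hv, if_true, if_false]
          rw [abs_cast_sub (by omega)]
          push_cast
          omega
        · have hlt : g v < g u := hord v hv u hu
          rw [abs_sub_comm, abs_cast_sub hlt.le] at heq
          simp only [hv, hYX u hu, if_true, if_false]
          rw [abs_sub_comm, abs_cast_sub (by omega)]
          push_cast
          omega
    · intro x hx y hy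
      simp only [hx, hYX y hy, if_true, if_false]
      have := hord x hx y hy
      omega
end
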